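/- Let A and B be real n×n matrices such that A is symmetric positive definite and the product A·B is symmetric. Then every eigenvalue of B (an element of the spectrum of B viewed as a complex matrix) is a positive real number if and only if A·B is positive definite; likewise, every eigenvalue of B is a negative real number if and only if A·B is negative definite. -/

import Mathlib

open Matrix

/-- A real symmetric matrix is positive definite: `vᵀPv > 0` for all nonzero `v`. -/
def Matrix.IsPD {n : ℕ} (P : Matrix (Fin n) (Fin n) ℝ) : Prop :=
  Pᵀ = P ∧ ∀ v : Fin n → ℝ, v ≠ 0 → 0 < v ⬝ᵥ (P *ᵥ v)

/-- A real symmetric matrix is negative definite: `vᵀPv < 0` for all nonzero `v`. -/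
def Matrix.IsND {n : ℕ} (P : Matrix (Fin n) (Fin n) ℝ) : Prop :=
  Pᵀ = P ∧ ∀ v : Fin n → ℝ, v ≠ 0 → v ⬝ᵥ (P *ᵥ v) < 0

section Aux
variable {n : ℕ}

lemma isPD_iff_posDef (P : Matrix (Fin n) (Fin n) ℝ) : P.IsPD ↔ P.PosDef := by
  rw [posDef_iff_dotProduct_mulVec]
  unfold Matrix.IsPD Matrix.IsHermitian
  simp [conjTranspose_eq_transpose_of_trivial]

lemma posDef_congr {P C : Matrix (Fin n) (Fin n) ℝ} (hP : P.PosDef) (hC : IsUnit C.det) :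
    (Cᵀ * P * C).PosDef := by
  have hPt : Pᵀ = P := by
    have := hP.1; rwa [Matrix.IsHermitian, conjTranspose_eq_transpose_of_trivial] at this
  refine posDef_iff_dotProduct_mulVec.mpr ⟨?_, ?_⟩
  · rw [Matrix.IsHermitian, conjTranspose_eq_transpose_of_trivial]
    rw [transpose_mul, transpose_mul, hPt, transpose_transpose, Matrix.mul_assoc]
  · intro x hx
    have hCu : IsUnit C := (isUnit_iff_isUnit_det _).2 hC
    have hinj : Function.Injective C.mulVec := mulVec_injective_iff_isUnit.mpr hCu
    have hx' : C *ᵥ x ≠ 0 := fun h => hx (hinj (by simpa using h))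
    have := hP.dotProduct_mulVec_pos hx'
    simp only [star_trivial] at this ⊢
    calc x ⬝ᵥ ((Cᵀ * P * C) *ᵥ x) = x ⬝ᵥ (Cᵀ *ᵥ (P *ᵥ (C *ᵥ x))) := by
          rw [← mulVec_mulVec, ← mulVec_mulVec]
      _ = (C *ᵥ x) ⬝ᵥ (P *ᵥ (C *ᵥ x)) := by rw [dotProduct_mulVec, vecMul_transpose]
      _ > 0 := this

lemma spectrum_map_real_symm (M : Matrix (Fin n) (Fin n) ℝ) (hM : M.IsHermitian) :
    spectrum ℂ (M.map Complex.ofReal) = Complex.ofReal '' Set.range hM.eigenvalues := by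
  classical
  set U : Matrix (Fin n) (Fin n) ℝ := (hM.eigenvectorUnitary : Matrix (Fin n) (Fin n) ℝ) with hUdef
  have hU1 : U * star U = 1 := (Matrix.mem_unitaryGroup_iff).mp hM.eigenvectorUnitary.2
  have hU2 : star U * U = 1 := (Matrix.mem_unitaryGroup_iff').mp hM.eigenvectorUnitary.2
  have hspec : M = U * diagonal (RCLike.ofReal ∘ hM.eigenvalues) * star U := hM.spectral_theorem
  let φ : Matrix (Fin n) (Fin n) ℝ →+* Matrix (Fin n) (Fin n) ℂ :=
    (Complex.ofRealHom).mapMatrix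
  let u : (Matrix (Fin n) (Fin n) ℂ)ˣ :=
    ⟨φ U, φ (star U), by rw [← _root_.map_mul, hU1, _root_.map_one], by rw [← _root_.map_mul, hU2, _root_.map_one]⟩
  have hmap : M.map Complex.ofReal
      = (u : Matrix (Fin n) (Fin n) ℂ) *
        (diagonal (RCLike.ofReal ∘ hM.eigenvalues)).map Complex.ofReal *
        ((u⁻¹ : (Matrix (Fin n) (Fin n) ℂ)ˣ) : Matrix (Fin n) (Fin n) ℂ) := by
    show φ M = φ U * φ (diagonal (RCLike.ofReal ∘ hM.eigenvalues)) * φ (star U)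
    rw [← _root_.map_mul, ← _root_.map_mul, ← hspec]
  rw [hmap, spectrum.units_conjugate]
  rw [Matrix.diagonal_map (by simp)]
  rw [spectrum_diagonal]
  ext z
  simp only [Set.mem_range, Set.mem_image, Function.comp_apply]
  constructor
  · rintro ⟨i, rfl⟩; exact ⟨hM.eigenvalues i, ⟨i, rfl⟩, by norm_num⟩
  · rintro ⟨x, ⟨i, rfl⟩, rfl⟩; exact ⟨i, by norm_num⟩

lemma posDef_iff_eigenvalues (M : Matrix (Fin n) (Fin n) ℝ) (hM : M.IsHermitian) :
    M.PosDef ↔ ∀ i, 0 < hM.eigenvalues i := by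
  classical
  constructor
  · intro h i; exact h.eigenvalues_pos i
  · intro h
    set U : Matrix (Fin n) (Fin n) ℝ := (hM.eigenvectorUnitary : Matrix (Fin n) (Fin n) ℝ) with hUdef
    have hU1 : U * star U = 1 := (Matrix.mem_unitaryGroup_iff).mp hM.eigenvectorUnitary.2
    have hU2 : star U * U = 1 := (Matrix.mem_unitaryGroup_iff').mp hM.eigenvectorUnitary.2
    have hdet : IsUnit (star U).det := by
      have : (star U).det * U.det = 1 := by rw [← det_mul, hU2, det_one]
      exact IsUnit.of_mul_eq_one _ this
    have hD : (diagonal (RCLike.ofReal ∘ hM.eigenvalues) : Matrix (Fin n) (Fin n) ℝ).PosDef := by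
      apply Matrix.PosDef.diagonal
      intro i; simpa using h i
    have hUt : U = (star U)ᵀ := by
      rw [star_eq_conjTranspose, conjTranspose_eq_transpose_of_trivial, transpose_transpose]
    have := posDef_congr (C := star U) hD hdet
    rw [← hUt] at this
    rw [hM.spectral_theorem]
    exact this

open scoped MatrixOrder in
/-- Main positive-definite lemma. -/
lemma main_pd (A B : Matrix (Fin n) (Fin n) ℝ)
    (hA : A.IsPD) (hAB : (A * B)ᵀ = A * B) :
    (∀ μ ∈ spectrum ℂ (B.map Complex.ofReal), μ.im = 0 ∧ 0 < μ.re) ↔ (A * B).PosDef := by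
  classical
  have hA' : A.PosDef := (isPD_iff_posDef A).1 hA
  have hAps : A.PosSemidef := hA'.posSemidef
  set S : Matrix (Fin n) (Fin n) ℝ := CFC.sqrt A with hSdef
  have hS : S.PosSemidef := Matrix.nonneg_iff_posSemidef.mp (CFC.sqrt_nonneg A)
  have hSA : S * S = A := CFC.sqrt_mul_sqrt_self A hAps.nonneg
  have hSsym : Sᵀ = S := by
    have := hS.1; rwa [Matrix.IsHermitian, conjTranspose_eq_transpose_of_trivial] at this
  have hdetS : IsUnit S.det := by
    have h1 : S.det * S.det = A.det := by rw [← det_mul, hSA]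
    have h2 : (0:ℝ) < A.det := hA'.det_pos
    have : S.det ≠ 0 := by intro h; rw [h, mul_zero] at h1; exact (h2.ne' h1.symm).elim
    exact this.isUnit
  have hSu : IsUnit S := (isUnit_iff_isUnit_det _).2 hdetS
  have hSS1 : S * S⁻¹ = 1 := mul_nonsing_inv _ hdetS
  have hSS2 : S⁻¹ * S = 1 := nonsing_inv_mul _ hdetS
  have hdetSinv : IsUnit S⁻¹.det := Matrix.isUnit_nonsing_inv_det _ hdetS
  have hSinvSym : (S⁻¹)ᵀ = S⁻¹ := by rw [transpose_nonsing_inv, hSsym]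
  set M : Matrix (Fin n) (Fin n) ℝ := S * B * S⁻¹ with hMdef
  have hM1 : M = S⁻¹ * (A * B) * S⁻¹ := by
    have : S⁻¹ * (A * B) * S⁻¹ = M := by
      rw [← hSA, hMdef]
      calc S⁻¹ * (S * S * B) * S⁻¹ = (S⁻¹ * S) * (S * B) * S⁻¹ := by
            simp only [Matrix.mul_assoc]
        _ = S * B * S⁻¹ := by rw [hSS2, Matrix.one_mul]
    exact this.symm
  have hMsym : M.IsHermitian := by
    rw [Matrix.IsHermitian, conjTranspose_eq_transpose_of_trivial, hM1]
    rw [transpose_mul, transpose_mul, hSinvSym, hAB]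
    simp only [Matrix.mul_assoc]
  have hABM : A * B = S * M * S := by
    have : S * M * S = A * B := by
      rw [hMdef, ← hSA]
      calc S * (S * B * S⁻¹) * S = (S * S) * B * (S⁻¹ * S) := by simp only [Matrix.mul_assoc]
        _ = S * S * B := by rw [hSS2, Matrix.mul_one]
    exact this.symm
  have hBM : B = S⁻¹ * M * S := by
    have : S⁻¹ * M * S = B := by
      rw [hMdef]
      calc S⁻¹ * (S * B * S⁻¹) * S = (S⁻¹ * S) * B * (S⁻¹ * S) := by simp only [Matrix.mul_assoc]
        _ = B := by rw [hSS2, Matrix.one_mul, Matrix.mul_one]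
    exact this.symm
  -- spectrum equality
  have hspecBM : spectrum ℂ (B.map Complex.ofReal) = spectrum ℂ (M.map Complex.ofReal) := by
    let φ : Matrix (Fin n) (Fin n) ℝ →+* Matrix (Fin n) (Fin n) ℂ :=
      (Complex.ofRealHom).mapMatrix
    let u : (Matrix (Fin n) (Fin n) ℂ)ˣ :=
      ⟨φ S, φ S⁻¹, by rw [← _root_.map_mul, hSS1, _root_.map_one], by rw [← _root_.map_mul, hSS2, _root_.map_one]⟩
    have : B.map Complex.ofReal = ((u⁻¹ : (Matrix (Fin n) (Fin n) ℂ)ˣ) : Matrix (Fin n) (Fin n) ℂ)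
        * M.map Complex.ofReal * (u : Matrix (Fin n) (Fin n) ℂ) := by
      show φ B = φ S⁻¹ * φ M * φ S
      rw [← _root_.map_mul, ← _root_.map_mul, ← hBM]
    rw [this, spectrum.units_conjugate']
  -- PosDef equivalence
  have hPDiff : (A * B).PosDef ↔ M.PosDef := by
    constructor
    · intro h
      have := posDef_congr (C := S⁻¹) h hdetSinv
      rwa [hSinvSym, ← hM1] at this
    · intro h
      have := posDef_congr (C := S) h hdetS
      rwa [hSsym, ← hABM] at this
  rw [hspecBM, spectrum_map_real_symm M hMsym, hPDiff, posDef_iff_eigenvalues M hMsym]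
  constructor
  · intro h i
    have := h (hMsym.eigenvalues i) ⟨hMsym.eigenvalues i, ⟨i, rfl⟩, rfl⟩
    simpa using this.2
  · rintro h μ ⟨x, ⟨i, rfl⟩, rfl⟩
    exact ⟨by simp, by simpa using h i⟩

end Aux

theorem stmt_0 {n : ℕ} (A B : Matrix (Fin n) (Fin n) ℝ)
    (hA : A.IsPD) (hAB : (A * B)ᵀ = A * B) :
    ((∀ μ ∈ spectrum ℂ (B.map Complex.ofReal), μ.im = 0 ∧ 0 < μ.re) ↔ (A * B).IsPD) ∧
    ((∀ μ ∈ spectrum ℂ (B.map Complex.ofReal), μ.im = 0 ∧ μ.re < 0) ↔ (A * B).IsND) := by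
  constructor
  · rw [isPD_iff_posDef]
    exact main_pd A B hA hAB
  · have hAB' : (A * (-B))ᵀ = A * (-B) := by rw [mul_neg, transpose_neg, hAB]
    have hmain := main_pd A (-B) hA hAB'
    have hmapneg : (-B).map Complex.ofReal = -(B.map Complex.ofReal) := by
      ext i j; simp
    have hspecneg : spectrum ℂ ((-B).map Complex.ofReal) = -spectrum ℂ (B.map Complex.ofReal) := by
      rw [hmapneg, ← spectrum.neg_eq]
    rw [hspecneg] at hmain
    have hiff : (∀ μ ∈ spectrum ℂ (B.map Complex.ofReal), μ.im = 0 ∧ μ.re < 0)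
        ↔ (∀ μ ∈ -spectrum ℂ (B.map Complex.ofReal), μ.im = 0 ∧ 0 < μ.re) := by
      constructor
      · rintro h μ hμ
        rw [Set.mem_neg] at hμ
        obtain ⟨h1, h2⟩ := h (-μ) hμ
        constructor
        · simpa using h1
        · simpa using h2
      · intro h μ hμ
        have : -μ ∈ -spectrum ℂ (B.map Complex.ofReal) := by
          rw [Set.mem_neg, neg_neg]; exact hμ
        obtain ⟨h1, h2⟩ := h (-μ) this
        constructor
        · simpa using h1
        · simpa using h2
    rw [hiff, hmain, mul_neg]
    constructor
    · intro h
      refine ⟨?_, fun v hv => ?_⟩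
      · have := h.1; rw [Matrix.IsHermitian, conjTranspose_eq_transpose_of_trivial] at this
        have := congrArg Neg.neg this; simpa using this
      · have := h.dotProduct_mulVec_pos hv
        simp only [star_trivial, neg_mulVec, dotProduct_neg] at this
        linarith
    · intro h
      refine posDef_iff_dotProduct_mulVec.mpr ⟨?_, fun v hv => ?_⟩
      · rw [Matrix.IsHermitian, conjTranspose_eq_transpose_of_trivial, transpose_neg, h.1]
      · have := h.2 v hv
        simp only [star_trivial, neg_mulVec, dotProduct_neg]
        linarith
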